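/- arXiv:2209.04984 — 13 statements merged into one kernel-verified Lean document; each statement's English description precedes it below -/
import Mathlib

section
/- Fix positive integers N_a, N_p and positive reals β, H_P, d_TA, d_AP, P_t, P_F, σ², σ_F². Let h̄, s̄ ∈ ℂ^{N_p} and s̃, ḡ ∈ ℂ^{N_a} be vectors all of whose entries have unit modulus, and let ψ₁, ψ₂, ψ₃ ∈ ℝ. Define the channels h = (√β/H_P)e^{-iψ₁} h̄ ∈ ℂ^{N_p}, S = (√β/d_AP)e^{-iψ₂} s̄ s̃^H ∈ ℂ^{N_p×N_a}, g = (√β/d_TA)e^{-iψ₃} ḡ ∈ ℂ^{N_a}. Let Θ_P ∈ ℂ^{N_p×N_p} and Θ_A ∈ ℂ^{N_a×N_a} be diagonal matrices with unit-modulus diagonal entries satisfying s̃^H Θ_A ḡ = N_a and h̄^H Θ_P s̄ = N_p, and set η = √(P_F d_TA² / (N_a(P_t β + d_TA² σ_F²))). Then the receive SNR |h^H Θ_P S η Θ_A g|² P_t / (‖h^H Θ_P S η Θ_A‖² σ_F² + σ²) equals P_t P_F β² N_a N_p² / (C₁ d_TA² + C₂ d_AP² + C₃ d_TA² d_AP²),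 where C₁ = σ_F² P_F β N_p², C₂ = σ² P_t H_P², C₃ = H_P² σ_F² σ²/β. -/
open Matrix in
/-- TAPR scheme: closed-form receive SNR (equations (16)-(17) of the paper).
With rank-one LOS channels, phase-aligned reflection matrices and the
power-tight amplification factor `η`, the receive SNR equals
`P_t P_F β² N_a N_p² / (C₁ d_TA² + C₂ d_AP² + C₃ d_TA² d_AP²)`. -/
theorem tapr_snr_closed_form (Na Np : ℕ) (hNa : 0 < Na) (hNp : 0 < Np)
    (β HP dTA dAP Pt PF σ2 σF2 : ℝ)
    (hβ : 0 < β) (hHP : 0 < HP) (hdTA : 0 < dTA) (hdAP : 0 < dAP)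
    (hPt : 0 < Pt) (hPF : 0 < PF) (hσ2 : 0 < σ2) (hσF2 : 0 < σF2)
    (hbar sbar : Fin Np → ℂ) (stil gbar : Fin Na → ℂ)
    (hhbar : ∀ i, Norm.norm (hbar i) = 1) (hsbar : ∀ i, Norm.norm (sbar i) = 1)
    (hstil : ∀ j, Norm.norm (stil j) = 1) (hgbar : ∀ j, Norm.norm (gbar j) = 1)
    (ψ₁ ψ₂ ψ₃ : ℝ)
    (h : Fin Np → ℂ)
    (hh : h = fun i => ((Real.sqrt β / HP : ℝ) : ℂ) *
      Complex.exp (-((ψ₁ : ℝ) * Complex.I)) * hbar i)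
    (S : Matrix (Fin Np) (Fin Na) ℂ)
    (hS : S = fun i j => ((Real.sqrt β / dAP : ℝ) : ℂ) *
      Complex.exp (-((ψ₂ : ℝ) * Complex.I)) * (sbar i * (starRingEnd ℂ) (stil j)))
    (g : Fin Na → ℂ)
    (hg : g = fun j => ((Real.sqrt β / dTA : ℝ) : ℂ) *
      Complex.exp (-((ψ₃ : ℝ) * Complex.I)) * gbar j)
    (θP : Fin Np → ℂ) (θA : Fin Na → ℂ)
    (hθP : ∀ i, Norm.norm (θP i) = 1) (hθA : ∀ j, Norm.norm (θA j) = 1)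
    (halignA : ∑ j, (starRingEnd ℂ) (stil j) * θA j * gbar j = (Na : ℂ))
    (halignP : ∑ i, (starRingEnd ℂ) (hbar i) * θP i * sbar i = (Np : ℂ))
    (η : ℝ)
    (hη : η = Real.sqrt (PF * dTA ^ 2 / ((Na : ℝ) * (Pt * β + dTA ^ 2 * σF2)))) :
    (Norm.norm (dotProduct
        (Matrix.vecMul (star h)
          (Matrix.diagonal θP * S * ((η : ℂ) • Matrix.diagonal θA))) g)) ^ 2 * Pt /
      ((∑ j, (Norm.norm ((Matrix.vecMul (star h)
          (Matrix.diagonal θP * S * ((η : ℂ) • Matrix.diagonal θA))) j)) ^ 2) * σF2 + σ2)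
    = Pt * PF * β ^ 2 * (Na : ℝ) * (Np : ℝ) ^ 2 /
        ((σF2 * PF * β * (Np : ℝ) ^ 2) * dTA ^ 2 + (σ2 * Pt * HP ^ 2) * dAP ^ 2 +
          (HP ^ 2 * σF2 * σ2 / β) * dTA ^ 2 * dAP ^ 2) := by
  have hη0 : 0 ≤ η := hη ▸ Real.sqrt_nonneg _
  have hη2 : η ^ 2 = PF * dTA ^ 2 / ((Na : ℝ) * (Pt * β + dTA ^ 2 * σF2)) := by
    rw [hη]; exact Real.sq_sqrt (by positivity)
  have ha : Real.sqrt β ^ 2 = β := Real.sq_sqrt hβ.le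
  have ha0 : 0 ≤ Real.sqrt β := Real.sqrt_nonneg _
  set K : ℂ := (η : ℂ) * ((Real.sqrt β / HP : ℝ) : ℂ) * ((Real.sqrt β / dAP : ℝ) : ℂ) *
      Complex.exp ((ψ₁ : ℝ) * Complex.I) * Complex.exp (-((ψ₂ : ℝ) * Complex.I)) *
      (Np : ℂ) with hK
  -- the row vector after AIRS/PIRS reflection
  have hw : ∀ j, (Matrix.vecMul (star h)
          (Matrix.diagonal θP * S * ((η : ℂ) • Matrix.diagonal θA))) j
      = K * ((starRingEnd ℂ) (stil j) * θA j) := by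
    intro j
    have hM : ∀ i, (Matrix.diagonal θP * S * ((η : ℂ) • Matrix.diagonal θA)) i j
        = (η : ℂ) * (θP i * S i j * θA j) := by
      intro i
      rw [Matrix.mul_smul, Matrix.smul_apply, Matrix.mul_diagonal, Matrix.diagonal_mul]
      simp [mul_comm, mul_assoc, mul_left_comm]
    have e1 : (Matrix.vecMul (star h)
            (Matrix.diagonal θP * S * ((η : ℂ) • Matrix.diagonal θA))) j
        = ∑ i, star (h i) * ((η : ℂ) * (θP i * S i j * θA j)) := by
      simp [Matrix.vecMul, dotProduct, hM]
    rw [e1]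
    have step : ∀ i, star (h i) * ((η : ℂ) * (θP i * S i j * θA j))
        = ((η : ℂ) * ((Real.sqrt β / HP : ℝ) : ℂ) * ((Real.sqrt β / dAP : ℝ) : ℂ) *
            Complex.exp ((ψ₁ : ℝ) * Complex.I) * Complex.exp (-((ψ₂ : ℝ) * Complex.I)) *
            ((starRingEnd ℂ) (stil j) * θA j)) * ((starRingEnd ℂ) (hbar i) * θP i * sbar i) := by
      intro i
      rw [hh, hS]
      simp only [RCLike.star_def, _root_.map_mul, Complex.conj_ofReal, ← Complex.exp_conj,
        map_neg, Complex.conj_I, mul_neg, neg_neg]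
      ring
    rw [Finset.sum_congr rfl (fun i _ => step i), ← Finset.mul_sum, halignP, hK]
    ring
  set r : ℝ := η * (Real.sqrt β / HP) * (Real.sqrt β / dAP) * (Np : ℝ) with hr
  have hr0 : 0 ≤ r := by positivity
  have habsK : Norm.norm K = r := by
    rw [hK, hr]
    simp only [norm_mul, Complex.norm_real, Real.norm_eq_abs, Complex.norm_exp, Complex.norm_natCast]
    rw [abs_of_nonneg (by positivity : (0:ℝ) ≤ Real.sqrt β / HP),
      abs_of_nonneg (by positivity : (0:ℝ) ≤ Real.sqrt β / dAP)]
    have h1 : (((ψ₁ : ℝ) : ℂ) * Complex.I).re = 0 := by simp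
    have h2 : (-(((ψ₂ : ℝ) : ℂ) * Complex.I)).re = 0 := by simp
    rw [h1, h2, Real.exp_zero, abs_of_nonneg hη0]
    ring
  have habsw : ∀ j, Norm.norm ((Matrix.vecMul (star h)
          (Matrix.diagonal θP * S * ((η : ℂ) • Matrix.diagonal θA))) j) = r := by
    intro j
    rw [hw j, norm_mul, habsK]
    simp [Complex.norm_conj, hstil j, hθA j]
  have hsum : (∑ j, (Norm.norm ((Matrix.vecMul (star h)
          (Matrix.diagonal θP * S * ((η : ℂ) • Matrix.diagonal θA))) j)) ^ 2)
      = (Na : ℝ) * r ^ 2 := by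
    simp only [habsw]
    rw [Finset.sum_const, Finset.card_univ, Fintype.card_fin, nsmul_eq_mul]
  -- dot product with g
  have hdot : dotProduct (Matrix.vecMul (star h)
          (Matrix.diagonal θP * S * ((η : ℂ) • Matrix.diagonal θA))) g
      = K * ((Real.sqrt β / dTA : ℝ) : ℂ) * Complex.exp (-((ψ₃ : ℝ) * Complex.I)) * (Na : ℂ) := by
    have e : dotProduct (Matrix.vecMul (star h)
          (Matrix.diagonal θP * S * ((η : ℂ) • Matrix.diagonal θA))) g
        = ∑ j, (K * ((Real.sqrt β / dTA : ℝ) : ℂ) * Complex.exp (-((ψ₃ : ℝ) * Complex.I))) *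
            ((starRingEnd ℂ) (stil j) * θA j * gbar j) := by
      rw [dotProduct]
      refine Finset.sum_congr rfl (fun j _ => ?_)
      rw [hw j, hg]
      ring
    rw [e, ← Finset.mul_sum]
    rw [show (∑ j, (starRingEnd ℂ) (stil j) * θA j * gbar j) = (Na : ℂ) from by
      rw [← halignA]]
  have habsdot : Norm.norm (dotProduct (Matrix.vecMul (star h)
          (Matrix.diagonal θP * S * ((η : ℂ) • Matrix.diagonal θA))) g)
      = r * (Real.sqrt β / dTA) * (Na : ℝ) := by
    rw [hdot]
    simp only [norm_mul, habsK, Complex.norm_real, Real.norm_eq_abs, Complex.norm_exp, Complex.norm_natCast]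
    rw [abs_of_nonneg (by positivity : (0:ℝ) ≤ Real.sqrt β / dTA)]
    have h3 : (-(((ψ₃ : ℝ) : ℂ) * Complex.I)).re = 0 := by simp
    rw [h3, Real.exp_zero]
    ring
  rw [habsdot, hsum]
  -- pure real algebra
  have hr2 : r ^ 2 = η ^ 2 * β ^ 2 * (Np : ℝ) ^ 2 / (HP ^ 2 * dAP ^ 2) := by
    rw [hr, mul_pow, mul_pow, mul_pow, div_pow, div_pow, ha]
    field_simp
  have h1 : (r * (Real.sqrt β / dTA) * (Na : ℝ)) ^ 2 = r ^ 2 * β / dTA ^ 2 * (Na : ℝ) ^ 2 := by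
    rw [mul_pow, mul_pow, div_pow, ha]; ring
  have hNa' : (0:ℝ) < (Na : ℝ) := by exact_mod_cast hNa
  have hNp' : (0:ℝ) < (Np : ℝ) := by exact_mod_cast hNp
  rw [h1, hr2, hη2]
  have hd1 : (σF2 * PF * β * (Np : ℝ) ^ 2) * dTA ^ 2 + (σ2 * Pt * HP ^ 2) * dAP ^ 2 +
          (HP ^ 2 * σF2 * σ2 / β) * dTA ^ 2 * dAP ^ 2 > 0 := by positivity
  have hd2 : (Na : ℝ) * (PF * dTA ^ 2 / ((Na : ℝ) * (Pt * β + dTA ^ 2 * σF2)) * β ^ 2 *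
        (Np : ℝ) ^ 2 / (HP ^ 2 * dAP ^ 2)) * σF2 + σ2 > 0 := by positivity
  rw [div_eq_div_iff hd2.ne' hd1.ne']
  field_simp
  ring
end

section
/- Fix positive integers N_a, N_p and positive reals β, H_P, d_PA, d_AR, P_t, P_F, σ², σ_F². Let h̄, s̄ ∈ ℂ^{N_a} and s̃, ḡ ∈ ℂ^{N_p} be vectors all of whose entries have unit modulus, and let ψ₁, ψ₂, ψ₃ ∈ ℝ. Define the channels h = (√β/d_AR)e^{-iψ₁} h̄ ∈ ℂ^{N_a}, S = (√β/d_PA)e^{-iψ₂} s̄ s̃^H ∈ ℂ^{N_a×N_p}, g = (√β/H_P)e^{-iψ₃} ḡ ∈ ℂ^{N_p}. Let Θ_A ∈ ℂ^{N_a×N_a} and Θ_P ∈ ℂ^{N_p×N_p} be diagonal matrices with unit-modulus diagonal entries satisfying h̄^H Θ_A s̄ = N_a and s̃^H Θ_P ḡ = N_p, and set η = √(P_F d_PA² H_P² / (N_a(P_t β² N_p² + d_PA² σ_F² H_P²))). Then the receive SNR |h^H Θ_A η S Θ_P g|² P_t / (η² ‖h^H Θ_A‖² σ_F² + σ²) equals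 N_a β² N_p² P_t P_F / (P_F σ_F² H_P² d_PA² + P_t σ² β N_p² d_AR² + C₃ d_PA² d_AR²), where C₃ = H_P² σ_F² σ²/β. -/
open Matrix in
/-- TPAR scheme: closed-form receive SNR (equations (20)-(21) of the paper).
With rank-one LOS channels, phase-aligned reflection matrices and the
power-tight amplification factor `η`, the receive SNR equals
`N_a β² N_p² P_t P_F / (P_F σ_F² H_P² d_PA² + P_t σ² β N_p² d_AR² + C₃ d_PA² d_AR²)`. -/
theorem tpar_snr_closed_form (Na Np : ℕ) (hNa : 0 < Na) (hNp : 0 < Np)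
    (β HP dPA dAR Pt PF σ2 σF2 : ℝ)
    (hβ : 0 < β) (hHP : 0 < HP) (hdPA : 0 < dPA) (hdAR : 0 < dAR)
    (hPt : 0 < Pt) (hPF : 0 < PF) (hσ2 : 0 < σ2) (hσF2 : 0 < σF2)
    (hbar sbar : Fin Na → ℂ) (stil gbar : Fin Np → ℂ)
    (hhbar : ∀ i, ‖hbar i‖ = 1) (hsbar : ∀ i, ‖sbar i‖ = 1)
    (hstil : ∀ j, ‖stil j‖ = 1) (hgbar : ∀ j, ‖gbar j‖ = 1)
    (ψ₁ ψ₂ ψ₃ : ℝ)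
    (h : Fin Na → ℂ)
    (hh : h = fun i => ((Real.sqrt β / dAR : ℝ) : ℂ) *
      Complex.exp (-((ψ₁ : ℝ) * Complex.I)) * hbar i)
    (S : Matrix (Fin Na) (Fin Np) ℂ)
    (hS : S = fun i j => ((Real.sqrt β / dPA : ℝ) : ℂ) *
      Complex.exp (-((ψ₂ : ℝ) * Complex.I)) * (sbar i * (starRingEnd ℂ) (stil j)))
    (g : Fin Np → ℂ)
    (hg : g = fun j => ((Real.sqrt β / HP : ℝ) : ℂ) *
      Complex.exp (-((ψ₃ : ℝ) * Complex.I)) * gbar j)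
    (θA : Fin Na → ℂ) (θP : Fin Np → ℂ)
    (hθA : ∀ i, ‖θA i‖ = 1) (hθP : ∀ j, ‖θP j‖ = 1)
    (halignA : ∑ i, (starRingEnd ℂ) (hbar i) * θA i * sbar i = (Na : ℂ))
    (halignP : ∑ j, (starRingEnd ℂ) (stil j) * θP j * gbar j = (Np : ℂ))
    (η : ℝ)
    (hη : η = Real.sqrt (PF * dPA ^ 2 * HP ^ 2 /
      ((Na : ℝ) * (Pt * β ^ 2 * (Np : ℝ) ^ 2 + dPA ^ 2 * σF2 * HP ^ 2)))) :
    (‖dotProduct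
        (Matrix.vecMul (star h)
          (Matrix.diagonal θA * ((η : ℂ) • (S * Matrix.diagonal θP)))) g‖) ^ 2 * Pt /
      (η ^ 2 * (∑ i, (‖(Matrix.vecMul (star h) (Matrix.diagonal θA)) i‖) ^ 2) *
          σF2 + σ2)
    = (Na : ℝ) * β ^ 2 * (Np : ℝ) ^ 2 * Pt * PF /
        (PF * σF2 * HP ^ 2 * dPA ^ 2 + Pt * σ2 * β * (Np : ℝ) ^ 2 * dAR ^ 2 +
          (HP ^ 2 * σF2 * σ2 / β) * dPA ^ 2 * dAR ^ 2) := by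
  have hbnn : (0:ℝ) ≤ Real.sqrt β := Real.sqrt_nonneg β
  have hb2 : Real.sqrt β ^ 2 = β := Real.sq_sqrt hβ.le
  have hD : (0:ℝ) < (Na : ℝ) * (Pt * β ^ 2 * (Np : ℝ) ^ 2 + dPA ^ 2 * σF2 * HP ^ 2) := by
    positivity
  have hηnn : 0 ≤ η := by rw [hη]; exact Real.sqrt_nonneg _
  have hη2 : η ^ 2 = PF * dPA ^ 2 * HP ^ 2 /
      ((Na : ℝ) * (Pt * β ^ 2 * (Np : ℝ) ^ 2 + dPA ^ 2 * σF2 * HP ^ 2)) := by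
    rw [hη, Real.sq_sqrt (by positivity)]
  -- Step 1: value of the complex dot product
  have hXval : dotProduct
        (Matrix.vecMul (star h)
          (Matrix.diagonal θA * ((η : ℂ) • (S * Matrix.diagonal θP)))) g
      = (η : ℂ) * (((Real.sqrt β / dAR : ℝ) : ℂ) * Complex.exp ((ψ₁ : ℝ) * Complex.I)) *
        (((Real.sqrt β / dPA : ℝ) : ℂ) * Complex.exp (-((ψ₂ : ℝ) * Complex.I))) *
        (((Real.sqrt β / HP : ℝ) : ℂ) * Complex.exp (-((ψ₃ : ℝ) * Complex.I))) *
        ((Na : ℂ) * (Np : ℂ)) := by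
    rw [← halignA, ← halignP, Finset.sum_mul_sum]
    subst hh hS hg
    simp only [dotProduct, Matrix.vecMul, Matrix.mul_apply, Matrix.smul_apply,
      Matrix.diagonal_apply, Pi.star_apply, smul_eq_mul, mul_ite, mul_zero, ite_mul, zero_mul,
      Finset.sum_ite_eq, Finset.sum_ite_eq', Finset.mem_univ, if_true, star_mul',
      Complex.star_def, Complex.conj_ofReal, Finset.mul_sum, Finset.sum_mul]
    rw [Finset.sum_comm]
    refine Finset.sum_congr rfl fun i _ => Finset.sum_congr rfl fun j _ => ?_
    have hc1 : (starRingEnd ℂ) (Complex.exp (-((ψ₁ : ℝ) * Complex.I)))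
        = Complex.exp ((ψ₁ : ℝ) * Complex.I) := by
      rw [← Complex.exp_conj]
      congr 1
      simp [Complex.conj_I]
    rw [hc1]
    erw [Matrix.mul_diagonal]
    beta_reduce
    ring
  rw [hXval]
  -- Step 2: modulus
  have habs : ‖((η : ℂ) * (((Real.sqrt β / dAR : ℝ) : ℂ) * Complex.exp ((ψ₁ : ℝ) * Complex.I)) *
        (((Real.sqrt β / dPA : ℝ) : ℂ) * Complex.exp (-((ψ₂ : ℝ) * Complex.I))) *
        (((Real.sqrt β / HP : ℝ) : ℂ) * Complex.exp (-((ψ₃ : ℝ) * Complex.I))) *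
        ((Na : ℂ) * (Np : ℂ)))‖
      = η * (Real.sqrt β / dAR) * (Real.sqrt β / dPA) * (Real.sqrt β / HP) * ((Na : ℝ) * (Np : ℝ)) := by
    simp only [norm_mul, Complex.norm_real, Real.norm_eq_abs, Complex.norm_exp, Complex.norm_natCast]
    have e1 : ((ψ₁ : ℂ) * Complex.I).re = 0 := by simp
    have e2 : (-((ψ₂ : ℂ) * Complex.I)).re = 0 := by simp
    have e3 : (-((ψ₃ : ℂ) * Complex.I)).re = 0 := by simp
    rw [e1, e2, e3, Real.exp_zero]
    rw [abs_of_nonneg hηnn, abs_of_nonneg (by positivity), abs_of_nonneg (by positivity),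
      abs_of_nonneg (by positivity)]
    ring
  rw [habs]
  -- Step 3: the noise norm sum
  have hnorm : (∑ i, (‖(Matrix.vecMul (star h) (Matrix.diagonal θA)) i‖) ^ 2)
      = (Na : ℝ) * (β / dAR ^ 2) := by
    have : ∀ i, (‖(Matrix.vecMul (star h) (Matrix.diagonal θA)) i‖) ^ 2
        = β / dAR ^ 2 := by
      intro i
      rw [Matrix.vecMul_diagonal]
      subst hh
      simp only [Pi.star_apply, star_mul', Complex.star_def, Complex.conj_ofReal, norm_mul,
        Complex.norm_real, Real.norm_eq_abs, Complex.norm_conj, hhbar, hθA]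
      rw [Complex.norm_exp]
      have e1 : (-((ψ₁ : ℂ) * Complex.I)).re = 0 := by simp
      rw [e1, Real.exp_zero, abs_of_nonneg (by positivity)]
      rw [mul_one, mul_one, mul_pow, one_pow, mul_one, div_pow, hb2]
    rw [Finset.sum_congr rfl fun i _ => this i, Finset.sum_const, Finset.card_univ,
      Fintype.card_fin, nsmul_eq_mul]
  rw [hnorm]
  -- Step 4: real algebra
  have hNa' : (0:ℝ) < (Na : ℝ) := by exact_mod_cast hNa
  have hNp' : (0:ℝ) < (Np : ℝ) := by exact_mod_cast hNp
  have hden : (0:ℝ) < η ^ 2 * ((Na : ℝ) * (β / dAR ^ 2)) * σF2 + σ2 := by positivity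
  have hden2 : (0:ℝ) < PF * σF2 * HP ^ 2 * dPA ^ 2 + Pt * σ2 * β * (Np : ℝ) ^ 2 * dAR ^ 2 +
      HP ^ 2 * σF2 * σ2 / β * dPA ^ 2 * dAR ^ 2 := by positivity
  rw [div_eq_div_iff hden.ne' hden2.ne']
  have expand : (η * (Real.sqrt β / dAR) * (Real.sqrt β / dPA) * (Real.sqrt β / HP) *
      ((Na : ℝ) * (Np : ℝ))) ^ 2 = η ^ 2 * (β ^ 3 / (dAR ^ 2 * dPA ^ 2 * HP ^ 2)) *
      ((Na : ℝ) ^ 2 * (Np : ℝ) ^ 2) := by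
    field_simp
    ring_nf
    rw [show Real.sqrt β ^ 6 = (Real.sqrt β ^ 2) ^ 3 by ring, hb2]
  rw [expand, hη2]
  field_simp
  ring
end

section
/- Let D, β, H_P, P_t, P_F, σ², σ_F², N_p, N_a be positive reals and let C₁ = σ_F² P_F β N_p², C₂ = σ² P_t H_P², a = P_t σ²/(P_F σ_F²), b = β N_p²/H_P², K = P_t P_F β² N_a N_p². Then C₂D/(C₁ + C₂) = aD/(a + b), and for any L with 0 ≤ L ≤ D, the function x ↦ K/(C₁x² + C₂(D − x)²) attains its maximum over [L, D] at the unique point x = max{aD/(a + b), L}. -/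
set_option maxHeartbeats 1000000

private lemma fpos {C₁ C₂ D x : ℝ} (h1 : 0 < C₁) (h2 : 0 < C₂) (hD : 0 < D) :
    0 < C₁ * x ^ 2 + C₂ * (D - x) ^ 2 := by
  rcases eq_or_ne x 0 with rfl | hx
  · have h : (0:ℝ) < C₂ * (D - 0) ^ 2 := by
      simp only [sub_zero]; positivity
    nlinarith [mul_nonneg h1.le (sq_nonneg (0:ℝ))]
  · have h : (0:ℝ) < C₁ * x ^ 2 := by positivity
    nlinarith [mul_nonneg h2.le (sq_nonneg (D - x))]

/-- TAPR scheme, approximated placement problem (equations (18) and (22) of the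
paper): `C₂D/(C₁+C₂) = aD/(a+b)`, and the approximated SNR
`x ↦ K/(C₁x² + C₂(D-x)²)` attains its maximum over `[L, D]` at the unique
point `max (aD/(a+b)) L`. -/
theorem tapr_approx_placement (D β HP Pt PF σ2 σF2 Np Na : ℝ)
    (hD : 0 < D) (hβ : 0 < β) (hHP : 0 < HP) (hPt : 0 < Pt) (hPF : 0 < PF)
    (hσ2 : 0 < σ2) (hσF2 : 0 < σF2) (hNp : 0 < Np) (hNa : 0 < Na)
    (C₁ C₂ a b K : ℝ)
    (hC₁ : C₁ = σF2 * PF * β * Np ^ 2) (hC₂ : C₂ = σ2 * Pt * HP ^ 2)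
    (ha : a = Pt * σ2 / (PF * σF2)) (hb : b = β * Np ^ 2 / HP ^ 2)
    (hK : K = Pt * PF * β ^ 2 * Na * Np ^ 2) :
    C₂ * D / (C₁ + C₂) = a * D / (a + b) ∧
    ∀ L : ℝ, 0 ≤ L → L ≤ D →
      max (a * D / (a + b)) L ∈ Set.Icc L D ∧
      (∀ x ∈ Set.Icc L D,
        K / (C₁ * x ^ 2 + C₂ * (D - x) ^ 2) ≤
          K / (C₁ * (max (a * D / (a + b)) L) ^ 2 +
            C₂ * (D - max (a * D / (a + b)) L) ^ 2)) ∧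
      (∀ x ∈ Set.Icc L D,
        K / (C₁ * x ^ 2 + C₂ * (D - x) ^ 2) =
          K / (C₁ * (max (a * D / (a + b)) L) ^ 2 +
            C₂ * (D - max (a * D / (a + b)) L) ^ 2) →
        x = max (a * D / (a + b)) L) := by
  have hC1 : 0 < C₁ := by rw [hC₁]; positivity
  have hC2 : 0 < C₂ := by rw [hC₂]; positivity
  have hS : 0 < C₁ + C₂ := by linarith
  have hKpos : 0 < K := by rw [hK]; positivity
  have heq : C₂ * D / (C₁ + C₂) = a * D / (a + b) := by
    subst hC₁ hC₂ ha hb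
    rw [div_eq_div_iff (by positivity) (by positivity)]
    field_simp
    ring
  refine ⟨heq, fun L hL hLD => ?_⟩
  set t := a * D / (a + b) with htdef
  have ht : (C₁ + C₂) * t = C₂ * D := by
    rw [← heq]; field_simp
  have htpos : 0 < t := by rw [← heq]; positivity
  have htD : t ≤ D := by
    rw [← heq, div_le_iff₀ hS]; nlinarith
  have hmD : max t L ≤ D := max_le htD hLD
  have hmL : L ≤ max t L := le_max_right _ _
  set m := max t L with hmdef
  have hfm : 0 < C₁ * m ^ 2 + C₂ * (D - m) ^ 2 := fpos hC1 hC2 hD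
  -- key: f x - f m = (C₁+C₂)(x-m)(x+m-2t)
  have hfac : ∀ x : ℝ, (C₁ * x ^ 2 + C₂ * (D - x) ^ 2) -
      (C₁ * m ^ 2 + C₂ * (D - m) ^ 2) = (C₁ + C₂) * (x - m) * (x + m - 2 * t) := by
    intro x; linear_combination 2 * (x - m) * ht
  have hmain : ∀ x ∈ Set.Icc L D,
      C₁ * m ^ 2 + C₂ * (D - m) ^ 2 ≤ C₁ * x ^ 2 + C₂ * (D - x) ^ 2 := by
    intro x hx
    have hx1 := hx.1
    have h := hfac x
    rcases le_total L t with hcase | hcase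
    · have hm : m = t := max_eq_left hcase
      rw [hm] at h ⊢
      nlinarith [mul_nonneg hS.le (sq_nonneg (x - t))]
    · have hm : m = L := max_eq_right hcase
      rw [hm] at h ⊢
      nlinarith [mul_nonneg (mul_nonneg hS.le (sub_nonneg.2 hx1))
        (by linarith : (0:ℝ) ≤ x + L - 2 * t)]
  refine ⟨⟨hmL, hmD⟩, fun x hx => ?_, fun x hx hxeq => ?_⟩
  · exact div_le_div_of_nonneg_left hKpos.le hfm (hmain x hx)
  · have hfx : 0 < C₁ * x ^ 2 + C₂ * (D - x) ^ 2 := fpos hC1 hC2 hD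
    have hfeq : C₁ * x ^ 2 + C₂ * (D - x) ^ 2 = C₁ * m ^ 2 + C₂ * (D - m) ^ 2 := by
      rw [div_eq_div_iff hfx.ne' hfm.ne'] at hxeq
      have : K * (C₁ * x ^ 2 + C₂ * (D - x) ^ 2) =
          K * (C₁ * m ^ 2 + C₂ * (D - m) ^ 2) := by linarith
      exact mul_left_cancel₀ hKpos.ne' this
    have h := hfac x
    rw [hfeq] at h
    have h0 : (C₁ + C₂) * (x - m) * (x + m - 2 * t) = 0 := by linarith
    have hx1 := hx.1
    rcases le_total L t with hcase | hcase
    · have hm : m = t := max_eq_left hcase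
      rw [hm] at h0 ⊢
      have h1 : (C₁ + C₂) * ((x - t) * (x - t)) = 0 := by linear_combination h0
      have h2 := (mul_eq_zero.mp h1).resolve_left hS.ne'
      have := mul_self_eq_zero.mp h2
      linarith
    · have hm : m = L := max_eq_right hcase
      rw [hm] at h0 ⊢
      by_contra hne
      have hxL : L < x := lt_of_le_of_ne hx1 (Ne.symm hne)
      have hp : 0 < (C₁ + C₂) * (x - L) * (x + L - 2 * t) :=
        mul_pos (mul_pos hS (sub_pos.2 hxL)) (by linarith)
      linarith
end

section
/- Let D, β, H_P, P_t, P_F, σ², σ_F², N_p, N_a be positive reals and let C₁ = σ_F² P_F β N_p², C₂ = σ² P_t H_P², a = P_t σ²/(P_F σ_F²), b = β N_p²/H_P², K = P_t P_F β² N_a N_p². Then at x* = aD/(a + b), K/(C₁(x*)² + C₂(D − x*)²) = (β N_a / D²)·(P_t/σ_F² + P_F β N_p²/(σ² H_P²)). -/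
/-- TAPR scheme: value of the approximated receive SNR at the unconstrained
optimizer `x* = aD/(a+b)` (equation (24) of the paper). -/
theorem tapr_approx_snr_value (D β HP Pt PF σ2 σF2 Np Na : ℝ)
    (hD : 0 < D) (hβ : 0 < β) (hHP : 0 < HP) (hPt : 0 < Pt) (hPF : 0 < PF)
    (hσ2 : 0 < σ2) (hσF2 : 0 < σF2) (hNp : 0 < Np) (hNa : 0 < Na)
    (C₁ C₂ a b K : ℝ)
    (hC₁ : C₁ = σF2 * PF * β * Np ^ 2) (hC₂ : C₂ = σ2 * Pt * HP ^ 2)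
    (ha : a = Pt * σ2 / (PF * σF2)) (hb : b = β * Np ^ 2 / HP ^ 2)
    (hK : K = Pt * PF * β ^ 2 * Na * Np ^ 2) :
    K / (C₁ * (a * D / (a + b)) ^ 2 + C₂ * (D - a * D / (a + b)) ^ 2) =
      (β * Na / D ^ 2) * (Pt / σF2 + PF * β * Np ^ 2 / (σ2 * HP ^ 2)) := by
  have hapos : 0 < a := by rw [ha]; positivity
  have hbpos : 0 < b := by rw [hb]; positivity
  have hab : a + b ≠ 0 := by positivity
  subst hC₁ hC₂ hK
  rw [ha, hb] at *
  field_simp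
  ring
end

section
/- Let D, β, H_P, P_t, P_F, σ², σ_F², N_p, N_a be positive reals and let C₁ = σ_F² P_F β N_p², C₂ = σ² P_t H_P², a = P_t σ²/(P_F σ_F²), b = β N_p²/H_P², K = P_t P_F β² N_a N_p². Then at x* = abD/(ab + 1), K/((C₂/a)(x*)² + aC₁(D − x*)²) = (β N_a / D²)·(P_t β N_p²/(σ_F² H_P²) + P_F/σ²). -/
/-- TPAR scheme: value of the approximated receive SNR at the unconstrained
optimizer `x* = abD/(ab+1)` (equation (29) of the paper). -/
theorem tpar_approx_snr_value (D β HP Pt PF σ2 σF2 Np Na : ℝ)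
    (hD : 0 < D) (hβ : 0 < β) (hHP : 0 < HP) (hPt : 0 < Pt) (hPF : 0 < PF)
    (hσ2 : 0 < σ2) (hσF2 : 0 < σF2) (hNp : 0 < Np) (hNa : 0 < Na)
    (C₁ C₂ a b K : ℝ)
    (hC₁ : C₁ = σF2 * PF * β * Np ^ 2) (hC₂ : C₂ = σ2 * Pt * HP ^ 2)
    (ha : a = Pt * σ2 / (PF * σF2)) (hb : b = β * Np ^ 2 / HP ^ 2)
    (hK : K = Pt * PF * β ^ 2 * Na * Np ^ 2) :
    K / ((C₂ / a) * (a * b * D / (a * b + 1)) ^ 2 +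
        a * C₁ * (D - a * b * D / (a * b + 1)) ^ 2) =
      (β * Na / D ^ 2) * (Pt * β * Np ^ 2 / (σF2 * HP ^ 2) + PF / σ2) := by
  subst hC₁ hC₂ ha hb hK
  have h1 : (0:ℝ) < Pt * σ2 / (PF * σF2) * (β * Np ^ 2 / HP ^ 2) := by positivity
  have h2 : Pt * σ2 / (PF * σF2) * (β * Np ^ 2 / HP ^ 2) + 1 ≠ 0 := by nlinarith
  field_simp
  ring
end

section
/- Let D, β, H_P, P_t, P_F, σ², σ_F², N_p, N_a be positive reals. Define SNR̄_a = (βN_a/D²)·(P_t/σ_F² + P_F β N_p²/(σ² H_P²)) and SNR̄_b = (βN_a/D²)·(P_t β N_p²/(σ_F² H_P²) + P_F/σ²). If N_p ≤ H_P/√β and P_F ≤ P_t σ²/σ_F², then SNR̄_a ≥ SNR̄_b, and hence log₂(1 + SNR̄_a) ≥ log₂(1 + SNR̄_b). -/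
/-- Proposition 1 of the paper (first case): if `N_p ≤ H_P/√β` and
`P_F ≤ P_tσ²/σ_F²`, then `SNR̄_a ≥ SNR̄_b` and hence
`log₂(1 + SNR̄_a) ≥ log₂(1 + SNR̄_b)`. -/
theorem tapr_beats_tpar (D β HP Pt PF σ2 σF2 Np Na : ℝ)
    (hD : 0 < D) (hβ : 0 < β) (hHP : 0 < HP) (hPt : 0 < Pt) (hPF : 0 < PF)
    (hσ2 : 0 < σ2) (hσF2 : 0 < σF2) (hNp : 0 < Np) (hNa : 0 < Na)
    (hNpb : Np ≤ HP / Real.sqrt β) (hPFb : PF ≤ Pt * σ2 / σF2) :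
    (β * Na / D ^ 2) * (Pt * β * Np ^ 2 / (σF2 * HP ^ 2) + PF / σ2) ≤
      (β * Na / D ^ 2) * (Pt / σF2 + PF * β * Np ^ 2 / (σ2 * HP ^ 2)) ∧
    Real.logb 2 (1 + (β * Na / D ^ 2) * (Pt * β * Np ^ 2 / (σF2 * HP ^ 2) + PF / σ2)) ≤
      Real.logb 2 (1 + (β * Na / D ^ 2) * (Pt / σF2 + PF * β * Np ^ 2 / (σ2 * HP ^ 2))) := by
  have hsβ : 0 < Real.sqrt β := Real.sqrt_pos.mpr hβ
  have hβeq : Real.sqrt β ^ 2 = β := Real.sq_sqrt hβ.le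
  have hkey : β * Np ^ 2 ≤ HP ^ 2 := by
    have h1 : Np * Real.sqrt β ≤ HP := (le_div_iff₀ hsβ).mp hNpb
    nlinarith [mul_le_mul h1 h1 (by positivity) hHP.le, hβeq]
  have hPF2 : PF / σ2 ≤ Pt / σF2 := by
    rw [div_le_div_iff₀ hσ2 hσF2]
    rw [le_div_iff₀ hσF2] at hPFb
    linarith
  have hc : β * Na / D ^ 2 > 0 := by positivity
  have hmain : Pt * β * Np ^ 2 / (σF2 * HP ^ 2) + PF / σ2 ≤
      Pt / σF2 + PF * β * Np ^ 2 / (σ2 * HP ^ 2) := by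
    have hHP2 : (0:ℝ) < HP ^ 2 := by positivity
    rw [div_add_div _ _ (by positivity : (σF2 * HP ^ 2) ≠ 0) (by positivity : σ2 ≠ 0),
        div_add_div _ _ (by positivity : σF2 ≠ 0) (by positivity : (σ2 * HP ^ 2) ≠ 0),
        div_le_div_iff₀ (by positivity) (by positivity)]
    have hPF3 : PF * σF2 ≤ Pt * σ2 := by
      rw [le_div_iff₀ hσF2] at hPFb; linarith
    have key2 : 0 ≤ (HP ^ 2 - β * Np ^ 2) * (Pt * σ2 - PF * σF2) * (σF2 * σ2 * HP ^ 2) := by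
      apply mul_nonneg (mul_nonneg (by linarith) (by linarith)) (by positivity)
    nlinarith [key2]
  refine ⟨by nlinarith, ?_⟩
  apply Real.logb_le_logb_of_le one_lt_two (by positivity)
  nlinarith
end

section
/- Let D, β, H_P, P_t, P_F, σ², σ_F², N_p, N_a be positive reals. Define SNR̄_a = (βN_a/D²)·(P_t/σ_F² + P_F β N_p²/(σ² H_P²)) and SNR̄_b = (βN_a/D²)·(P_t β N_p²/(σ_F² H_P²) + P_F/σ²). If N_p < H_P/√β and P_F > P_t σ²/σ_F², then SNR̄_a < SNR̄_b, and hence log₂(1 + SNR̄_a) < log₂(1 + SNR̄_b). -/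
/-- Proposition 1 of the paper (strict converse case): if `N_p < H_P/√β` and
`P_F > P_tσ²/σ_F²`, then `SNR̄_a < SNR̄_b` and hence
`log₂(1 + SNR̄_a) < log₂(1 + SNR̄_b)`. -/
theorem tpar_beats_tapr_strict (D β HP Pt PF σ2 σF2 Np Na : ℝ)
    (hD : 0 < D) (hβ : 0 < β) (hHP : 0 < HP) (hPt : 0 < Pt) (hPF : 0 < PF)
    (hσ2 : 0 < σ2) (hσF2 : 0 < σF2) (hNp : 0 < Np) (hNa : 0 < Na)
    (hNpb : Np < HP / Real.sqrt β) (hPFb : PF > Pt * σ2 / σF2) :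
    (β * Na / D ^ 2) * (Pt / σF2 + PF * β * Np ^ 2 / (σ2 * HP ^ 2)) <
      (β * Na / D ^ 2) * (Pt * β * Np ^ 2 / (σF2 * HP ^ 2) + PF / σ2) ∧
    Real.logb 2 (1 + (β * Na / D ^ 2) * (Pt / σF2 + PF * β * Np ^ 2 / (σ2 * HP ^ 2))) <
      Real.logb 2 (1 + (β * Na / D ^ 2) * (Pt * β * Np ^ 2 / (σF2 * HP ^ 2) + PF / σ2)) := by
  have hsβ : 0 < Real.sqrt β := Real.sqrt_pos.mpr hβ
  have hNpHP : Np * Real.sqrt β < HP := by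
    exact (lt_div_iff₀ hsβ).mp hNpb
  have hβNp : β * Np ^ 2 < HP ^ 2 := by
    have h1 : (Np * Real.sqrt β) ^ 2 < HP ^ 2 := by
      apply pow_lt_pow_left₀ hNpHP (by positivity) (by norm_num)
    have h2 : Real.sqrt β ^ 2 = β := Real.sq_sqrt hβ.le
    nlinarith [h1, h2]
  have hPFσ : Pt * σ2 < PF * σF2 := by
    rw [gt_iff_lt, div_lt_iff₀ hσF2] at hPFb
    linarith
  have hcoef : 0 < β * Na / D ^ 2 := by positivity
  have hinner : Pt / σF2 + PF * β * Np ^ 2 / (σ2 * HP ^ 2) <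
      Pt * β * Np ^ 2 / (σF2 * HP ^ 2) + PF / σ2 := by
    rw [div_add_div _ _ (ne_of_gt hσF2) (by positivity), div_add_div _ _ (by positivity) (ne_of_gt hσ2),
      div_lt_div_iff₀ (by positivity) (by positivity)]
    nlinarith [mul_pos (mul_pos (sub_pos.mpr hPFσ) (sub_pos.mpr hβNp)) (mul_pos (mul_pos hσ2 hσF2) (pow_pos hHP 2))]
  have hmain := mul_lt_mul_of_pos_left hinner hcoef
  refine ⟨hmain, ?_⟩
  apply Real.logb_lt_logb (by norm_num)
  · positivity
  · linarith
end

section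
/- Let D, β, H_P, P_t, P_F, σ², σ_F², N_p, N_a be positive reals. Define SNR̄_a = (βN_a/D²)·(P_t/σ_F² + P_F β N_p²/(σ² H_P²)) and SNR̄_b = (βN_a/D²)·(P_t β N_p²/(σ_F² H_P²) + P_F/σ²). If N_p ≥ H_P/√β and P_F ≤ P_t σ²/σ_F², then SNR̄_b ≥ SNR̄_a; and if N_p ≥ H_P/√β and P_F ≥ P_t σ²/σ_F², then SNR̄_a ≥ SNR̄_b. -/
/-- Proposition 1 of the paper (reversed case `N_p ≥ H_P/√β`): if
`P_F ≤ P_tσ²/σ_F²` then `SNR̄_b ≥ SNR̄_a`, and if `P_F ≥ P_tσ²/σ_F²` then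
`SNR̄_a ≥ SNR̄_b`. -/
theorem tapr_tpar_reversed_case (D β HP Pt PF σ2 σF2 Np Na : ℝ)
    (hD : 0 < D) (hβ : 0 < β) (hHP : 0 < HP) (hPt : 0 < Pt) (hPF : 0 < PF)
    (hσ2 : 0 < σ2) (hσF2 : 0 < σF2) (hNp : 0 < Np) (hNa : 0 < Na)
    (hNpb : Np ≥ HP / Real.sqrt β) :
    (PF ≤ Pt * σ2 / σF2 →
      (β * Na / D ^ 2) * (Pt / σF2 + PF * β * Np ^ 2 / (σ2 * HP ^ 2)) ≤
        (β * Na / D ^ 2) * (Pt * β * Np ^ 2 / (σF2 * HP ^ 2) + PF / σ2)) ∧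
    (PF ≥ Pt * σ2 / σF2 →
      (β * Na / D ^ 2) * (Pt * β * Np ^ 2 / (σF2 * HP ^ 2) + PF / σ2) ≤
        (β * Na / D ^ 2) * (Pt / σF2 + PF * β * Np ^ 2 / (σ2 * HP ^ 2))) := by
  have hsβ : 0 < Real.sqrt β := Real.sqrt_pos.mpr hβ
  have hkey : HP ^ 2 ≤ β * Np ^ 2 := by
    have h1 : HP ≤ Np * Real.sqrt β := by
      rw [ge_iff_le, div_le_iff₀ hsβ] at hNpb; linarith
    have h2 : HP ^ 2 ≤ (Np * Real.sqrt β) ^ 2 := by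
      apply pow_le_pow_left₀ hHP.le h1
    have h3 : (Real.sqrt β) ^ 2 = β := Real.sq_sqrt hβ.le
    nlinarith [h2, h3]
  have hc : 0 ≤ β * Na / D ^ 2 := by positivity
  constructor
  · intro h
    apply mul_le_mul_of_nonneg_left _ hc
    have hPFσ : PF / σ2 ≤ Pt / σF2 := by
      rw [div_le_div_iff₀ hσ2 hσF2]
      rw [le_div_iff₀ hσF2] at h; linarith
    rw [div_le_div_iff₀ hσ2 hσF2] at hPFσ
    rw [div_add_div _ _ (ne_of_gt hσF2) (by positivity),
        div_add_div _ _ (by positivity) (ne_of_gt hσ2),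
        div_le_div_iff₀ (by positivity) (by positivity)]
    nlinarith [mul_nonneg (mul_nonneg (sub_nonneg.mpr hkey) (sub_nonneg.mpr hPFσ)) (mul_pos hσ2 hσF2).le]
  · intro h
    apply mul_le_mul_of_nonneg_left _ hc
    have hPFσ : Pt / σF2 ≤ PF / σ2 := by
      rw [div_le_div_iff₀ hσF2 hσ2]
      rw [ge_iff_le, div_le_iff₀ hσF2] at h; linarith
    rw [div_le_div_iff₀ hσF2 hσ2] at hPFσ
    rw [div_add_div _ _ (by positivity) (ne_of_gt hσ2),
        div_add_div _ _ (ne_of_gt hσF2) (by positivity),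
        div_le_div_iff₀ (by positivity) (by positivity)]
    nlinarith [mul_nonneg (mul_nonneg (sub_nonneg.mpr hkey) (sub_nonneg.mpr hPFσ)) (mul_pos hσ2 hσF2).le]
end

section
/- Let D, H_A, H_P, β, P_t, P_F, σ², σ_F², N_p be positive reals, and set C₁ = σ_F² P_F β N_p², C₂ = σ² P_t H_P², C₃ = H_P² σ_F² σ²/β. Define d_TA(x)² = x² + H_A² and d_AP(x)² = (D − x)² + (H_P − H_A)². If 4√(C₁C₂) ≥ C₃·(D² + H_A² + (H_P − H_A)²), then for every x ∈ [0, D], C₃ d_TA(x)² d_AP(x)² ≤ C₁ d_TA(x)² + C₂ d_AP(x)². -/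
/-- Core AM–GM argument: if `C₃ * S ≤ 4√(C₁C₂)` and `a + b ≤ S` with everything
positive, then `C₃ a b ≤ C₁ a + C₂ b`. -/
lemma tapr_aux (C₁ C₂ C₃ a b S : ℝ) (hC₁ : 0 < C₁) (hC₂ : 0 < C₂) (hC₃ : 0 < C₃)
    (haP : 0 < a) (hbP : 0 ≤ b) (habS : a + b ≤ S)
    (hcond : C₃ * S ≤ 4 * Real.sqrt (C₁ * C₂)) :
    C₃ * a * b ≤ C₁ * a + C₂ * b := by
  have hsnn : 0 ≤ Real.sqrt (C₁ * C₂) := Real.sqrt_nonneg _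
  have htnn : 0 ≤ Real.sqrt (a * b) := Real.sqrt_nonneg _
  have ht2 : Real.sqrt (a * b) ^ 2 = a * b := Real.sq_sqrt (by positivity)
  have hu2 : Real.sqrt (C₁ * a) ^ 2 = C₁ * a := Real.sq_sqrt (by positivity)
  have hv2 : Real.sqrt (C₂ * b) ^ 2 = C₂ * b := Real.sq_sqrt (by positivity)
  have huv : Real.sqrt (C₁ * a) * Real.sqrt (C₂ * b)
      = Real.sqrt (C₁ * C₂) * Real.sqrt (a * b) := by
    rw [← Real.sqrt_mul (by positivity), ← Real.sqrt_mul (by positivity)]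
    ring_nf
  have htab : Real.sqrt (a * b) ≤ (a + b) / 2 := by
    have h1 : a * b ≤ ((a + b) / 2) ^ 2 := by nlinarith [sq_nonneg (a - b)]
    calc Real.sqrt (a * b) ≤ Real.sqrt (((a + b) / 2) ^ 2) := Real.sqrt_le_sqrt h1
      _ = (a + b) / 2 := Real.sqrt_sq (by positivity)
  have hCt : C₃ * Real.sqrt (a * b) ≤ 2 * Real.sqrt (C₁ * C₂) := by nlinarith
  have huv2 : 2 * (Real.sqrt (C₁ * a) * Real.sqrt (C₂ * b))
      ≤ Real.sqrt (C₁ * a) ^ 2 + Real.sqrt (C₂ * b) ^ 2 := by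
    nlinarith [sq_nonneg (Real.sqrt (C₁ * a) - Real.sqrt (C₂ * b))]
  nlinarith [mul_le_mul_of_nonneg_right hCt htnn]

/-- Precise form of Lemma 3 of the paper for the TAPR scheme: if
`4√(C₁C₂) ≥ C₃(D² + H_A² + (H_P−H_A)²)`, then for every `x ∈ [0, D]` the cross
term `C₃ d_TA(x)² d_AP(x)²` is dominated by `C₁ d_TA(x)² + C₂ d_AP(x)²`. -/
theorem tapr_cross_term_dominated (D HA HP β Pt PF σ2 σF2 Np : ℝ)
    (hD : 0 < D) (hHA : 0 < HA) (hHP : 0 < HP) (hβ : 0 < β) (hPt : 0 < Pt)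
    (hPF : 0 < PF) (hσ2 : 0 < σ2) (hσF2 : 0 < σF2) (hNp : 0 < Np)
    (C₁ C₂ C₃ : ℝ)
    (hC₁ : C₁ = σF2 * PF * β * Np ^ 2) (hC₂ : C₂ = σ2 * Pt * HP ^ 2)
    (hC₃ : C₃ = HP ^ 2 * σF2 * σ2 / β)
    (hcond : 4 * Real.sqrt (C₁ * C₂) ≥ C₃ * (D ^ 2 + HA ^ 2 + (HP - HA) ^ 2)) :
    ∀ x ∈ Set.Icc (0 : ℝ) D,
      C₃ * (x ^ 2 + HA ^ 2) * ((D - x) ^ 2 + (HP - HA) ^ 2) ≤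
        C₁ * (x ^ 2 + HA ^ 2) + C₂ * ((D - x) ^ 2 + (HP - HA) ^ 2) := by
  intro x hx
  obtain ⟨hx0, hxD⟩ := hx
  have hC₁P : 0 < C₁ := by rw [hC₁]; positivity
  have hC₂P : 0 < C₂ := by rw [hC₂]; positivity
  have hC₃P : 0 < C₃ := by rw [hC₃]; positivity
  refine tapr_aux C₁ C₂ C₃ _ _ (D ^ 2 + HA ^ 2 + (HP - HA) ^ 2) hC₁P hC₂P hC₃P
    (by positivity) (by positivity) ?_ hcond
  nlinarith [mul_nonneg hx0 (sub_nonneg.mpr hxD)]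
end

section
/- Let D, H_A, H_P, β, P_t, P_F, σ², σ_F², N_p be positive reals, and set C₁ = σ_F² P_F β N_p², C₂ = σ² P_t H_P², C₃ = H_P² σ_F² σ²/β, a = P_t σ²/(P_F σ_F²). Define d_PA(x)² = x² + (H_P − H_A)² and d_AR(x)² = (D − x)² + H_A². If 4√(C₁C₂) ≥ C₃·(D² + H_A² + (H_P − H_A)²), then for every x ∈ [0, D], C₃ d_PA(x)² d_AR(x)² ≤ (C₂/a) d_PA(x)² + aC₁ d_AR(x)². -/
/-- Auxiliary AM–GM: if `r² ≤ p·q` with everything nonnegative, then `2r ≤ p + q`. -/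
lemma tpar_amgm_aux (p q r : ℝ) (hp : 0 ≤ p) (hq : 0 ≤ q) (hr : 0 ≤ r)
    (h : r ^ 2 ≤ p * q) : 2 * r ≤ p + q := by
  have h1 : r ≤ Real.sqrt (p * q) := by
    rw [← Real.sqrt_sq hr]
    exact Real.sqrt_le_sqrt h
  have h2 : 2 * Real.sqrt (p * q) ≤ p + q := by
    rw [Real.sqrt_mul hp]
    have := two_mul_le_add_sq (Real.sqrt p) (Real.sqrt q)
    rw [Real.sq_sqrt hp, Real.sq_sqrt hq] at this
    linarith
  linarith

/-- Precise form of Lemma 3 of the paper for the TPAR scheme: if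
`4√(C₁C₂) ≥ C₃(D² + H_A² + (H_P−H_A)²)`, then for every `x ∈ [0, D]` the cross
term `C₃ d_PA(x)² d_AR(x)²` is dominated by `(C₂/a) d_PA(x)² + aC₁ d_AR(x)²`. -/
theorem tpar_cross_term_dominated (D HA HP β Pt PF σ2 σF2 Np : ℝ)
    (hD : 0 < D) (hHA : 0 < HA) (hHP : 0 < HP) (hβ : 0 < β) (hPt : 0 < Pt)
    (hPF : 0 < PF) (hσ2 : 0 < σ2) (hσF2 : 0 < σF2) (hNp : 0 < Np)
    (C₁ C₂ C₃ a : ℝ)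
    (hC₁ : C₁ = σF2 * PF * β * Np ^ 2) (hC₂ : C₂ = σ2 * Pt * HP ^ 2)
    (hC₃ : C₃ = HP ^ 2 * σF2 * σ2 / β) (ha : a = Pt * σ2 / (PF * σF2))
    (hcond : 4 * Real.sqrt (C₁ * C₂) ≥ C₃ * (D ^ 2 + HA ^ 2 + (HP - HA) ^ 2)) :
    ∀ x ∈ Set.Icc (0 : ℝ) D,
      C₃ * (x ^ 2 + (HP - HA) ^ 2) * ((D - x) ^ 2 + HA ^ 2) ≤
        (C₂ / a) * (x ^ 2 + (HP - HA) ^ 2) + a * C₁ * ((D - x) ^ 2 + HA ^ 2) := by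
  intro x hx
  obtain ⟨hx0, hxD⟩ := hx
  have hC₁pos : 0 < C₁ := by rw [hC₁]; positivity
  have hC₂pos : 0 < C₂ := by rw [hC₂]; positivity
  have hC₃pos : 0 < C₃ := by rw [hC₃]; positivity
  have hapos : 0 < a := by rw [ha]; positivity
  clear hC₁ hC₂ hC₃ ha
  set u : ℝ := x ^ 2 + (HP - HA) ^ 2 with hu
  set v : ℝ := (D - x) ^ 2 + HA ^ 2 with hv
  have hupos : 0 ≤ u := by positivity
  have hvpos : 0 ≤ v := by positivity
  set s : ℝ := Real.sqrt (C₁ * C₂) with hs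
  have hs0 : 0 ≤ s := Real.sqrt_nonneg _
  have hs2 : s ^ 2 = C₁ * C₂ := Real.sq_sqrt (by positivity)
  set t : ℝ := Real.sqrt (u * v) with ht
  have ht0 : 0 ≤ t := Real.sqrt_nonneg _
  have ht2 : t ^ 2 = u * v := Real.sq_sqrt (by positivity)
  -- u + v ≤ D² + HA² + (HP-HA)²
  have hsum : u + v ≤ D ^ 2 + HA ^ 2 + (HP - HA) ^ 2 := by
    have hxx : x ^ 2 + (D - x) ^ 2 ≤ D ^ 2 := by
      nlinarith [mul_nonneg hx0 (sub_nonneg.2 hxD)]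
    simp only [hu, hv]
    linarith
  -- 2t ≤ u + v
  have h2t : 2 * t ≤ u + v := tpar_amgm_aux u v t hupos hvpos ht0 (le_of_eq ht2)
  -- C₃ * t ≤ 2 s
  have hct : C₃ * t ≤ 2 * s := by
    have h1 : C₃ * (2 * t) ≤ C₃ * (u + v) :=
      mul_le_mul_of_nonneg_left h2t hC₃pos.le
    have h2 : C₃ * (u + v) ≤ C₃ * (D ^ 2 + HA ^ 2 + (HP - HA) ^ 2) :=
      mul_le_mul_of_nonneg_left hsum hC₃pos.le
    linarith
  -- AM-GM: 2 (s t) ≤ (C₂/a) u + a C₁ v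
  have hamgm : 2 * (s * t) ≤ (C₂ / a) * u + a * C₁ * v := by
    apply tpar_amgm_aux _ _ _ (by positivity) (by positivity)
      (mul_nonneg hs0 ht0)
    have : ((C₂ / a) * u) * ((a * C₁) * v) = (C₁ * C₂) * (u * v) := by
      field_simp
    rw [this, mul_pow, hs2, ht2]
  -- combine
  have hfin : (C₃ * t) * t ≤ (2 * s) * t := mul_le_mul_of_nonneg_right hct ht0
  have heq : C₃ * u * v = (C₃ * t) * t := by
    have : t * t = u * v := by rw [← sq]; exact ht2
    rw [mul_assoc, ← this]; ring
  rw [heq]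
  calc (C₃ * t) * t ≤ (2 * s) * t := hfin
    _ = 2 * (s * t) := by ring
    _ ≤ (C₂ / a) * u + a * C₁ * v := hamgm
end

section
/- Let D, H_A, β, P_t, σ², σ_F², N_a, N_p, H_P be positive reals. For P_F > N_a σ_F², define a(P_F) = P_t σ²/(P_F σ_F²), b = β N_p²/H_P², x_a(P_F) = √(max{0, N_a β P_t/(P_F − N_a σ_F²) − H_A²}), and x^a(P_F) = max{a(P_F)D/(a(P_F) + b), x_a(P_F)}. Then x^a is non-increasing on (N_a σ_F², ∞): for all N_a σ_F² < P_F ≤ P_F', x^a(P_F') ≤ x^a(P_F). -/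
/-- Lemma 1 of the paper, `P_F` part (TAPR scheme): the optimized Tx–AIRS
horizontal distance `x^a(P_F) = max (a(P_F)D/(a(P_F)+b)) (x_a(P_F))` is
non-increasing in the AIRS amplification power budget `P_F` on `(N_aσ_F², ∞)`. -/
theorem tapr_placement_antitone_in_PF (D HA β Pt σ2 σF2 Na Np HP : ℝ)
    (hD : 0 < D) (hHA : 0 < HA) (hβ : 0 < β) (hPt : 0 < Pt) (hσ2 : 0 < σ2)
    (hσF2 : 0 < σF2) (hNa : 0 < Na) (hNp : 0 < Np) (hHP : 0 < HP) :
    ∀ PF PF' : ℝ, Na * σF2 < PF → PF ≤ PF' →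
      max ((Pt * σ2 / (PF' * σF2)) * D / (Pt * σ2 / (PF' * σF2) + β * Np ^ 2 / HP ^ 2))
        (Real.sqrt (max 0 (Na * β * Pt / (PF' - Na * σF2) - HA ^ 2))) ≤
      max ((Pt * σ2 / (PF * σF2)) * D / (Pt * σ2 / (PF * σF2) + β * Np ^ 2 / HP ^ 2))
        (Real.sqrt (max 0 (Na * β * Pt / (PF - Na * σF2) - HA ^ 2))) := by
  intro PF PF' hPF hle
  have hPFpos : 0 < PF := lt_trans (by positivity) hPF
  have hPF'pos : 0 < PF' := lt_of_lt_of_le hPFpos hle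
  set b := β * Np ^ 2 / HP ^ 2 with hb
  have hbpos : 0 < b := by positivity
  set a := Pt * σ2 / (PF * σF2) with ha
  set a' := Pt * σ2 / (PF' * σF2) with ha'
  have hapos : 0 < a := by positivity
  have ha'pos : 0 < a' := by positivity
  have haa : a' ≤ a := by
    apply div_le_div_of_nonneg_left (by positivity) (by positivity)
    exact mul_le_mul_of_nonneg_right hle hσF2.le
  apply max_le_max
  · rw [div_le_div_iff₀ (by positivity) (by positivity)]
    have : a' * b ≤ a * b := mul_le_mul_of_nonneg_right haa hbpos.le
    nlinarith
  · apply Real.sqrt_le_sqrt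
    apply max_le_max le_rfl
    have h1 : 0 < PF - Na * σF2 := by linarith
    have h2 : PF - Na * σF2 ≤ PF' - Na * σF2 := by linarith
    have := div_le_div_of_nonneg_left (by positivity : (0:ℝ) ≤ Na * β * Pt) h1 h2
    linarith
end

section
/- Let D, H_A, H_P, β, P_t, σ², σ_F², N_a, N_p be positive reals. For P_F > N_a σ_F², define a(P_F) = P_t σ²/(P_F σ_F²), b = β N_p²/H_P², x_b(P_F) = √(max{0, N_a N_p² β² P_t/((P_F − N_a σ_F²) H_P²) − (H_P − H_A)²}), and x^b(P_F) = max{a(P_F)·b·D/(a(P_F)·b + 1), x_b(P_F)}. Then x^b is non-increasing on (N_a σ_F², ∞): for all N_a σ_F² < P_F ≤ P_F', x^b(P_F') ≤ x^b(P_F). -/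
/-- Lemma 2 of the paper, `P_F` part (TPAR scheme): the optimized Tx–AIRS
horizontal distance `x^b(P_F) = max (a(P_F)bD/(a(P_F)b+1)) (x_b(P_F))` is
non-increasing in the AIRS amplification power budget `P_F` on `(N_aσ_F², ∞)`. -/
theorem tpar_placement_antitone_in_PF (D HA HP β Pt σ2 σF2 Na Np : ℝ)
    (hD : 0 < D) (hHA : 0 < HA) (hHP : 0 < HP) (hβ : 0 < β) (hPt : 0 < Pt)
    (hσ2 : 0 < σ2) (hσF2 : 0 < σF2) (hNa : 0 < Na) (hNp : 0 < Np) :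
    ∀ PF PF' : ℝ, Na * σF2 < PF → PF ≤ PF' →
      max ((Pt * σ2 / (PF' * σF2)) * (β * Np ^ 2 / HP ^ 2) * D /
            ((Pt * σ2 / (PF' * σF2)) * (β * Np ^ 2 / HP ^ 2) + 1))
        (Real.sqrt (max 0
          (Na * Np ^ 2 * β ^ 2 * Pt / ((PF' - Na * σF2) * HP ^ 2) - (HP - HA) ^ 2))) ≤
      max ((Pt * σ2 / (PF * σF2)) * (β * Np ^ 2 / HP ^ 2) * D /
            ((Pt * σ2 / (PF * σF2)) * (β * Np ^ 2 / HP ^ 2) + 1))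
        (Real.sqrt (max 0
          (Na * Np ^ 2 * β ^ 2 * Pt / ((PF - Na * σF2) * HP ^ 2) - (HP - HA) ^ 2))) := by
  intro PF PF' hPF hle
  have hPFpos : 0 < PF := lt_trans (by positivity) hPF
  have hPF'pos : 0 < PF' := lt_of_lt_of_le hPFpos hle
  set b := β * Np ^ 2 / HP ^ 2 with hb
  have hbpos : 0 < b := by positivity
  have hc : 0 < Pt * σ2 / (PF * σF2) := by positivity
  have hc' : 0 < Pt * σ2 / (PF' * σF2) := by positivity
  set c := Pt * σ2 / (PF * σF2) * b with hcdef
  set c' := Pt * σ2 / (PF' * σF2) * b with hc'def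
  have hcpos : 0 < c := by positivity
  have hc'pos : 0 < c' := by positivity
  have hcc : c' ≤ c := by
    apply mul_le_mul_of_nonneg_right _ hbpos.le
    apply div_le_div_of_nonneg_left (by positivity) (by positivity)
    exact mul_le_mul_of_nonneg_right hle hσF2.le
  apply max_le_max
  · rw [div_le_div_iff₀ (by positivity) (by positivity)]
    nlinarith
  · apply Real.sqrt_le_sqrt
    apply max_le_max le_rfl
    apply sub_le_sub_right
    have hps : 0 < PF - Na * σF2 := by linarith
    apply div_le_div_of_nonneg_left (by positivity) (by positivity)
    apply mul_le_mul_of_nonneg_right _ (by positivity)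
    linarith
end

section
/- Let D, H_A, H_P, β, P_t, P_F, σ², σ_F², N_a be positive reals with P_F > N_a σ_F², and define a = P_t σ²/(P_F σ_F²), b(N_p) = β N_p²/H_P², x_b(N_p) = √(max{0, N_a N_p² β² P_t/((P_F − N_a σ_F²) H_P²) − (H_P − H_A)²}), and x^b(N_p) = max{a·b(N_p)·D/(a·b(N_p) + 1), x_b(N_p)}. Then N_p ↦ a·b(N_p)·D/(a·b(N_p) + 1) is strictly increasing on (0, ∞), N_p ↦ x_b(N_p) is non-decreasing on (0, ∞), and consequently x^b is non-decreasing in N_p: for all 0 < N_p ≤ N_p', x^b(N_p) ≤ x^b(N_p'). -/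
private lemma frac_strict (D t t' : ℝ) (hD : 0 < D) (ht : 0 ≤ t) (h : t < t') :
    t * D / (t + 1) < t' * D / (t' + 1) := by
  have h1 : 0 < t + 1 := by linarith
  have h2 : 0 < t' + 1 := by linarith
  rw [div_lt_div_iff₀ h1 h2]
  nlinarith

/-- Lemma 2 of the paper, `N_p` part (TPAR scheme): the unconstrained optimizer
`N_p ↦ a·b(N_p)·D/(a·b(N_p)+1)` is strictly increasing on `(0, ∞)`, the
constraint boundary `N_p ↦ x_b(N_p)` is non-decreasing on `(0, ∞)`, and hence
the optimized Tx–AIRS distance `x^b(N_p)` is non-decreasing in `N_p`. -/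
theorem tpar_placement_monotone_in_Np (D HA HP β Pt PF σ2 σF2 Na : ℝ)
    (hD : 0 < D) (hHA : 0 < HA) (hHP : 0 < HP) (hβ : 0 < β) (hPt : 0 < Pt)
    (hPF : 0 < PF) (hσ2 : 0 < σ2) (hσF2 : 0 < σF2) (hNa : 0 < Na)
    (hbudget : PF > Na * σF2)
    (a : ℝ) (ha : a = Pt * σ2 / (PF * σF2)) :
    (∀ Np Np' : ℝ, 0 < Np → Np < Np' →
      a * (β * Np ^ 2 / HP ^ 2) * D / (a * (β * Np ^ 2 / HP ^ 2) + 1) <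
        a * (β * Np' ^ 2 / HP ^ 2) * D / (a * (β * Np' ^ 2 / HP ^ 2) + 1)) ∧
    (∀ Np Np' : ℝ, 0 < Np → Np ≤ Np' →
      Real.sqrt (max 0
          (Na * Np ^ 2 * β ^ 2 * Pt / ((PF - Na * σF2) * HP ^ 2) - (HP - HA) ^ 2)) ≤
        Real.sqrt (max 0
          (Na * Np' ^ 2 * β ^ 2 * Pt / ((PF - Na * σF2) * HP ^ 2) - (HP - HA) ^ 2))) ∧
    (∀ Np Np' : ℝ, 0 < Np → Np ≤ Np' →
      max (a * (β * Np ^ 2 / HP ^ 2) * D / (a * (β * Np ^ 2 / HP ^ 2) + 1))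
          (Real.sqrt (max 0
            (Na * Np ^ 2 * β ^ 2 * Pt / ((PF - Na * σF2) * HP ^ 2) - (HP - HA) ^ 2))) ≤
        max (a * (β * Np' ^ 2 / HP ^ 2) * D / (a * (β * Np' ^ 2 / HP ^ 2) + 1))
          (Real.sqrt (max 0
            (Na * Np' ^ 2 * β ^ 2 * Pt / ((PF - Na * σF2) * HP ^ 2) - (HP - HA) ^ 2)))) := by
  have haP : 0 < a := by rw [ha]; positivity
  have hHP2 : 0 < HP ^ 2 := by positivity
  have hden : 0 < (PF - Na * σF2) * HP ^ 2 := mul_pos (by linarith) hHP2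
  have key1 : ∀ Np Np' : ℝ, 0 < Np → Np < Np' →
      a * (β * Np ^ 2 / HP ^ 2) * D / (a * (β * Np ^ 2 / HP ^ 2) + 1) <
        a * (β * Np' ^ 2 / HP ^ 2) * D / (a * (β * Np' ^ 2 / HP ^ 2) + 1) := by
    intro Np Np' hNp hlt
    apply frac_strict D _ _ hD (by positivity)
    have hsq : Np ^ 2 < Np' ^ 2 := by nlinarith
    have h1 : (0:ℝ) < a * β / HP ^ 2 := by positivity
    calc a * (β * Np ^ 2 / HP ^ 2) = a * β / HP ^ 2 * Np ^ 2 := by ring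
    _ < a * β / HP ^ 2 * Np' ^ 2 := by exact (mul_lt_mul_iff_right₀ h1).2 hsq
    _ = a * (β * Np' ^ 2 / HP ^ 2) := by ring
  have key2 : ∀ Np Np' : ℝ, 0 < Np → Np ≤ Np' →
      Real.sqrt (max 0
          (Na * Np ^ 2 * β ^ 2 * Pt / ((PF - Na * σF2) * HP ^ 2) - (HP - HA) ^ 2)) ≤
        Real.sqrt (max 0
          (Na * Np' ^ 2 * β ^ 2 * Pt / ((PF - Na * σF2) * HP ^ 2) - (HP - HA) ^ 2)) := by
    intro Np Np' hNp hle
    apply Real.sqrt_le_sqrt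
    apply max_le_max le_rfl
    apply sub_le_sub_right
    apply div_le_div_of_nonneg_right _ hden.le
    have hsq : Np ^ 2 ≤ Np' ^ 2 := by nlinarith
    exact mul_le_mul_of_nonneg_right (mul_le_mul_of_nonneg_right
      (mul_le_mul_of_nonneg_left hsq hNa.le) (by positivity)) hPt.le
  refine ⟨key1, key2, ?_⟩
  intro Np Np' hNp hle
  rcases eq_or_lt_of_le hle with rfl | hlt
  · exact le_rfl
  · exact max_le_max (key1 Np Np' hNp hlt).le (key2 Np Np' hNp hle)
end
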